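/- Let h_1,…,h_N be Hermitian d×d complex matrices with H = ∑_{l=1}^N h_l and λ = ∑_{l=1}^N ‖h_l‖ (operator norm). Let j ≥ 1 and m ≥ 1 be integers, and define f : ℝ → M_d(ℂ) by f(Δ) := U_2(Δ/j)^j − exp(−iΔH), where U_2(δ) = (∏_{l=1}^{N} exp(−i h_l δ/2))·(∏_{l=N}^{1} exp(−i h_l δ/2)). Then for every real Δ, the degree-2m Taylor remainder of f at 0 satisfies ‖f(Δ) − ∑_{n=0}^{2m} (Δⁿ/n!) · f^{(n)}(0)‖ ≤ (2·(λ|Δ|)^{2m+1} / (2m+1)!) · e^{λ|Δ|}. -/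

import Mathlib

open scoped Matrix.Norms.L2Operator

/-- The symmetric second-order Trotter product formula
`U₂ δ = (∏_{l=1}^{N} exp (-i h l δ / 2)) * (∏_{l=N}^{1} exp (-i h l δ / 2))`,
the second product taken in reversed order. -/
noncomputable def U2 {d N : ℕ} (h : Fin N → Matrix (Fin d) (Fin d) ℂ) (δ : ℝ) :
    Matrix (Fin d) (Fin d) ℂ :=
  (List.ofFn fun l => NormedSpace.exp (((-(δ / 2) : ℝ) * Complex.I : ℂ) • h l)).prod *
    (List.ofFn fun l =>
      NormedSpace.exp (((-(δ / 2) : ℝ) * Complex.I : ℂ) • h l)).reverse.prod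

namespace PFTaylor

variable {d : ℕ}

local notation "Mat" => Matrix (Fin d) (Fin d) ℂ

lemma norm_one_le : ‖(1 : Mat)‖ ≤ 1 := by
  rw [Matrix.cstar_norm_def, map_one]
  exact ContinuousLinearMap.norm_id_le

/-- `f` is represented on all of `ℝ` by the power series with coefficients `c`,
which are bounded by `r ^ n / n !`. -/
def IsRep (f : ℝ → Mat) (c : ℕ → Mat) (r : ℝ) : Prop :=
  0 ≤ r ∧ (∀ n, ‖c n‖ ≤ r ^ n / n.factorial) ∧ ∀ Δ : ℝ, f Δ = ∑' n, Δ ^ n • c n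

lemma IsRep.summable_norm {f : ℝ → Mat} {c : ℕ → Mat} {r : ℝ}
    (h : IsRep f c r) (Δ : ℝ) : Summable fun n => ‖Δ ^ n • c n‖ := by
  refine Summable.of_nonneg_of_le (fun n => norm_nonneg _) (fun n => ?_)
    (Real.summable_pow_div_factorial (r * |Δ|))
  calc ‖Δ ^ n • c n‖ = |Δ| ^ n * ‖c n‖ := by
        rw [norm_smul, Real.norm_eq_abs, abs_pow]
    _ ≤ |Δ| ^ n * (r ^ n / n.factorial) := by
        have := h.2.1 n; gcongr
    _ = (r * |Δ|) ^ n / n.factorial := by rw [mul_pow]; ring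

lemma IsRep.summable {f : ℝ → Mat} {c : ℕ → Mat} {r : ℝ}
    (h : IsRep f c r) (Δ : ℝ) : Summable fun n => Δ ^ n • c n :=
  (h.summable_norm Δ).of_norm

lemma IsRep.mono {f : ℝ → Mat} {c : ℕ → Mat} {r r' : ℝ}
    (h : IsRep f c r) (hrr : r ≤ r') : IsRep f c r' := by
  refine ⟨le_trans h.1 hrr, fun n => le_trans (h.2.1 n) ?_, h.2.2⟩
  exact div_le_div_of_nonneg_right (pow_le_pow_left₀ h.1 hrr n) (by positivity)


lemma isRep_exp (A : Mat) :
    IsRep (fun Δ : ℝ => NormedSpace.exp (Δ • A))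
      (fun n => ((n.factorial : ℝ))⁻¹ • A ^ n) ‖A‖ := by
  have hpow : ∀ n, ‖A ^ n‖ ≤ ‖A‖ ^ n := by
    intro n
    induction n with
    | zero => simpa using norm_one_le
    | succ k ih =>
        calc ‖A ^ (k + 1)‖ = ‖A ^ k * A‖ := by rw [pow_succ]
          _ ≤ ‖A ^ k‖ * ‖A‖ := norm_mul_le _ _
          _ ≤ ‖A‖ ^ k * ‖A‖ := by gcongr
          _ = ‖A‖ ^ (k + 1) := (pow_succ _ _).symm
  refine ⟨norm_nonneg _, fun n => ?_, fun Δ => ?_⟩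
  · rw [norm_smul, norm_inv, Real.norm_natCast, div_eq_inv_mul, inv_mul_le_iff₀ (by positivity),
      ← mul_assoc, mul_inv_cancel₀ (by positivity), one_mul]
    exact hpow n
  · rw [NormedSpace.exp_eq_tsum (𝕂 := ℂ)]
    refine tsum_congr fun n => ?_
    rw [smul_pow, smul_comm]
    congr 1
    rw [← Complex.ofReal_natCast, ← Complex.ofReal_inv, Complex.coe_smul]

lemma isRep_one : IsRep (fun _ : ℝ => (1 : Mat))
    (fun n => if n = 0 then 1 else 0) 0 := by
  refine ⟨le_rfl, fun n => ?_, fun Δ => ?_⟩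
  · cases n with
    | zero => simpa using norm_one_le
    | succ k => simp [Nat.succ_ne_zero, zero_pow]
  · rw [tsum_eq_single 0 (fun n hn => by simp [hn])]
    simp

lemma IsRep.mul {f g : ℝ → Mat} {a b : ℕ → Mat} {r s : ℝ}
    (hf : IsRep f a r) (hg : IsRep g b s) :
    IsRep (fun Δ => f Δ * g Δ)
      (fun n => ∑ k ∈ Finset.range (n + 1), a k * b (n - k)) (r + s) := by
  refine ⟨add_nonneg hf.1 hg.1, fun n => ?_, fun Δ => ?_⟩
  · calc ‖∑ k ∈ Finset.range (n + 1), a k * b (n - k)‖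
        ≤ ∑ k ∈ Finset.range (n + 1), ‖a k‖ * ‖b (n - k)‖ :=
          le_trans (norm_sum_le _ _) (Finset.sum_le_sum fun k _ => norm_mul_le _ _)
      _ ≤ ∑ k ∈ Finset.range (n + 1),
            (r ^ k / k.factorial) * (s ^ (n - k) / (n - k).factorial) := by
          refine Finset.sum_le_sum fun k _ => ?_
          exact mul_le_mul (hf.2.1 k) (hg.2.1 (n - k)) (norm_nonneg _)
            (div_nonneg (pow_nonneg hf.1 k) (by positivity))
      _ = (r + s) ^ n / n.factorial := by
          rw [add_pow, Finset.sum_div]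
          refine Finset.sum_congr rfl fun k hk => ?_
          have hk' : k ≤ n := Finset.mem_range_succ_iff.mp hk
          have := Nat.choose_mul_factorial_mul_factorial hk'
          have hkf : (0:ℝ) < (k.factorial : ℝ) := by positivity
          have hnkf : (0:ℝ) < ((n - k).factorial : ℝ) := by positivity
          have hnf : (0:ℝ) < (n.factorial : ℝ) := by positivity
          have hcast : ((n.choose k : ℝ)) * k.factorial * (n - k).factorial
              = n.factorial := by exact_mod_cast congrArg (Nat.cast (R := ℝ)) this
          field_simp
          linear_combination (-(r ^ k * s ^ (n - k))) * hcast
  · have h1 := hf.summable_norm Δ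
    have h2 := hg.summable_norm Δ
    show f Δ * g Δ = _
    rw [hf.2.2 Δ, hg.2.2 Δ, tsum_mul_tsum_eq_tsum_sum_range_of_summable_norm h1 h2]
    refine tsum_congr fun n => ?_
    rw [Finset.smul_sum]
    refine Finset.sum_congr rfl fun k hk => ?_
    have hk' : k ≤ n := Finset.mem_range_succ_iff.mp hk
    rw [smul_mul_smul_comm, ← pow_add, Nat.add_sub_cancel' hk']

/-- Existential version of `IsRep`. -/
def HasRep (f : ℝ → Mat) (r : ℝ) : Prop := ∃ c, IsRep f c r

lemma HasRep.mono {f : ℝ → Mat} {r r' : ℝ} (h : HasRep f r) (hrr : r ≤ r') :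
    HasRep f r' := h.imp fun _ hc => hc.mono hrr

lemma HasRep.mul {f g : ℝ → Mat} {r s : ℝ} (hf : HasRep f r) (hg : HasRep g s) :
    HasRep (fun Δ => f Δ * g Δ) (r + s) := by
  obtain ⟨a, ha⟩ := hf; obtain ⟨b, hb⟩ := hg; exact ⟨_, ha.mul hb⟩

lemma HasRep.congr {f g : ℝ → Mat} {r : ℝ} (hf : HasRep f r) (hfg : ∀ Δ, g Δ = f Δ) :
    HasRep g r := by
  obtain ⟨c, hc⟩ := hf
  exact ⟨c, hc.1, hc.2.1, fun Δ => (hfg Δ).trans (hc.2.2 Δ)⟩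

lemma HasRep.pow {f : ℝ → Mat} {r : ℝ} (hf : HasRep f r) (k : ℕ) :
    HasRep (fun Δ => f Δ ^ k) ((k : ℝ) * r) := by
  induction k with
  | zero =>
      simp only [pow_zero, Nat.cast_zero, zero_mul]
      exact ⟨_, isRep_one⟩
  | succ n ih =>
      have := ih.mul hf
      refine (this.congr fun Δ => pow_succ _ _).mono ?_
      push_cast; ring_nf; exact le_rfl

lemma hasRep_list_prod {ι : Type*} (F : ι → ℝ → Mat) (ρ : ι → ℝ)
    (hF : ∀ i, HasRep (F i) (ρ i)) (L : List ι) :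
    HasRep (fun Δ => (L.map fun i => F i Δ).prod) ((L.map ρ).sum) := by
  induction L with
  | nil =>
      simp only [List.map_nil, List.prod_nil, List.sum_nil]
      exact ⟨_, isRep_one⟩
  | cons i L ih =>
      have h2 := (hF i).mul ih
      have h3 : ((i :: L).map ρ).sum = ρ i + (L.map ρ).sum := by simp
      rw [h3]
      exact h2.congr fun Δ => by simp


lemma iteratedDeriv_of_rep {f : ℝ → Mat} {c : ℕ → Mat}
    (hs : ∀ Δ : ℝ, Summable fun n => ‖Δ ^ n • c n‖)
    (hfs : ∀ Δ : ℝ, f Δ = ∑' n, Δ ^ n • c n) (n : ℕ) :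
    iteratedDeriv n f 0 = n.factorial • c n := by
  set p : FormalMultilinearSeries ℝ ℝ Mat :=
    fun n => ContinuousMultilinearMap.mkPiRing ℝ (Fin n) (c n) with hp
  have happly : ∀ (k : ℕ) (y : ℝ), (p k fun _ => y) = y ^ k • c k := by
    intro k y
    rw [hp]
    simp [ContinuousMultilinearMap.mkPiRing_apply, Finset.prod_const]
  have hradius : p.radius = ⊤ := by
    refine p.radius_eq_top_of_summable_norm fun r => ?_
    refine (hs (r : ℝ)).congr fun n => ?_
    rw [norm_smul, norm_pow, Real.norm_eq_abs, abs_of_nonneg r.coe_nonneg, mul_comm]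
    congr 1
    exact (ContinuousMultilinearMap.norm_mkPiRing (𝕜 := ℝ) (ι := Fin n) (c n)).symm
  have hball : HasFPowerSeriesOnBall f p 0 ⊤ := by
    refine ⟨hradius.ge, ENNReal.zero_lt_top, ?_⟩
    intro y _
    have hS := ((hs y).of_norm).hasSum
    rw [← hfs y] at hS
    rw [zero_add]
    exact HasSum.congr_fun hS fun k => happly k y
  have h1 := hball.factorial_smul (1 : ℝ) n
  rw [iteratedDeriv_eq_iteratedFDeriv, ← h1, happly, one_pow, one_smul]

lemma tail_exp_bound {x : ℝ} (hx : 0 ≤ x) (K : ℕ) :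
    ∑' n : ℕ, x ^ (n + K) / (n + K).factorial
      ≤ x ^ K / K.factorial * Real.exp x := by
  have hsum1 : Summable fun n : ℕ => x ^ (n + K) / (n + K).factorial :=
    ((Real.summable_pow_div_factorial x).comp_injective (add_left_injective K))
  have hsum2 : Summable fun n : ℕ => x ^ K / K.factorial * (x ^ n / n.factorial) :=
    (Real.summable_pow_div_factorial x).mul_left _
  have hle : ∀ n : ℕ, x ^ (n + K) / (n + K).factorial
      ≤ x ^ K / K.factorial * (x ^ n / n.factorial) := by
    intro n
    have hfle : (K.factorial * n.factorial : ℝ) ≤ ((n + K).factorial : ℝ) := by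
      have := Nat.factorial_mul_factorial_dvd_factorial_add K n
      have h2 : K.factorial * n.factorial ≤ (K + n).factorial :=
        Nat.le_of_dvd (Nat.factorial_pos _) this
      rw [add_comm n K]
      exact_mod_cast h2
    calc x ^ (n + K) / (n + K).factorial
        ≤ x ^ (n + K) / (K.factorial * n.factorial : ℝ) := by
          gcongr
      _ = x ^ K / K.factorial * (x ^ n / n.factorial) := by
          rw [pow_add]; ring
  calc ∑' n : ℕ, x ^ (n + K) / (n + K).factorial
      ≤ ∑' n : ℕ, x ^ K / K.factorial * (x ^ n / n.factorial) :=
        Summable.tsum_le_tsum hle hsum1 hsum2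
    _ = x ^ K / K.factorial * ∑' n : ℕ, x ^ n / n.factorial := tsum_mul_left
    _ = x ^ K / K.factorial * Real.exp x := by
        congr 1
        rw [Real.exp_eq_exp_ℝ, NormedSpace.exp_eq_tsum_div]

end PFTaylor

open PFTaylor

/-- **Product-formula Taylor remainder bound** (Eq. (14)): for
`f Δ = U₂ (Δ / j) ^ j - exp (-i Δ H)` with `H = ∑ l, h l` and `λ = ∑ l, ‖h l‖`,
the degree-`2 m` Taylor remainder of `f` at `0` obeys
`‖f Δ - ∑_{n ≤ 2 m} (Δ ^ n / n !) • fⁿ(0)‖ ≤ (2 (λ |Δ|) ^ (2 m + 1) / (2 m + 1)!) e ^ (λ |Δ|)`. -/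
theorem product_formula_taylor_remainder {d N : ℕ}
    (h : Fin N → Matrix (Fin d) (Fin d) ℂ)
    (hherm : ∀ l, (h l).IsHermitian)
    (H : Matrix (Fin d) (Fin d) ℂ) (hH : H = ∑ l, h l)
    (lam : ℝ) (hlam : lam = ∑ l, ‖h l‖)
    (j m : ℕ) (hj : 1 ≤ j) (hm : 1 ≤ m)
    (f : ℝ → Matrix (Fin d) (Fin d) ℂ)
    (hf : ∀ Δ : ℝ, f Δ = (U2 h (Δ / j)) ^ j -
      NormedSpace.exp ((-(Δ : ℂ) * Complex.I) • H)) :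
    ∀ Δ : ℝ,
      ‖f Δ - ∑ n ∈ Finset.range (2 * m + 1),
          ((Δ ^ n / n.factorial : ℝ)) • iteratedDeriv n f 0‖
        ≤ 2 * (lam * |Δ|) ^ (2 * m + 1) / (2 * m + 1).factorial *
          Real.exp (lam * |Δ|) := by
  have hj0 : (0 : ℝ) < (j : ℝ) := by exact_mod_cast hj
  have hlam0 : 0 ≤ lam := by
    rw [hlam]; exact Finset.sum_nonneg fun _ _ => norm_nonneg _
  -- the single-factor generators
  set A : Fin N → Matrix (Fin d) (Fin d) ℂ :=
    fun l => (((-(1 / (2 * (j : ℝ))) : ℝ) : ℂ) * Complex.I) • h l with hA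
  have hAnorm : ∀ l, ‖A l‖ = ‖h l‖ / (2 * (j : ℝ)) := by
    intro l
    rw [hA, norm_smul, norm_mul, Complex.norm_real, Complex.norm_I, mul_one,
      Real.norm_eq_abs, abs_neg, abs_of_nonneg (by positivity)]
    ring
  have hexpA : ∀ l, HasRep (fun Δ : ℝ => NormedSpace.exp (Δ • A l))
      (‖h l‖ / (2 * (j : ℝ))) := fun l => hAnorm l ▸ ⟨_, isRep_exp (A l)⟩
  have hfac : ∀ (l : Fin N) (Δ : ℝ),
      ((-(Δ / (j : ℝ) / 2) : ℝ) * Complex.I : ℂ) • h l = Δ • A l := by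
    intro l Δ
    have hsc : ((-(Δ / (j : ℝ) / 2) : ℝ) * Complex.I : ℂ)
        = Δ • ((((-(1 / (2 * (j : ℝ))) : ℝ)) : ℂ) * Complex.I) := by
      rw [Complex.real_smul]; push_cast; ring
    rw [hA, hsc, smul_assoc]
  -- representation of U2 h (Δ / j)
  have hprod1 := hasRep_list_prod (fun l (Δ : ℝ) => NormedSpace.exp (Δ • A l))
    (fun l => ‖h l‖ / (2 * (j : ℝ))) hexpA (List.finRange N)
  have hprod2 := hasRep_list_prod (fun l (Δ : ℝ) => NormedSpace.exp (Δ • A l))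
    (fun l => ‖h l‖ / (2 * (j : ℝ))) hexpA (List.finRange N).reverse
  have hsum1 : ((List.finRange N).map fun l => ‖h l‖ / (2 * (j : ℝ))).sum
      = lam / (2 * (j : ℝ)) := by
    rw [← List.ofFn_eq_map, List.sum_ofFn, ← Finset.sum_div, ← hlam]
  have hsum2 : (((List.finRange N).reverse).map fun l => ‖h l‖ / (2 * (j : ℝ))).sum
      = lam / (2 * (j : ℝ)) := by
    rw [← hsum1, List.map_reverse, List.sum_reverse]
  rw [hsum1] at hprod1
  rw [hsum2] at hprod2
  have hU2 : HasRep (fun Δ : ℝ => U2 h (Δ / (j : ℝ)))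
      (lam / (2 * (j : ℝ)) + lam / (2 * (j : ℝ))) := by
    refine (hprod1.mul hprod2).congr fun Δ => ?_
    rw [U2]
    have hofn : (List.ofFn fun l =>
          NormedSpace.exp (((-(Δ / (j : ℝ) / 2) : ℝ) * Complex.I : ℂ) • h l))
        = (List.finRange N).map fun l => NormedSpace.exp (Δ • A l) := by
      simp only [hfac, List.ofFn_eq_map]
    rw [hofn, ← List.map_reverse]
  have harith : (j : ℝ) * (lam / (2 * (j : ℝ)) + lam / (2 * (j : ℝ))) = lam := by
    field_simp
    ring
  have hP : HasRep (fun Δ : ℝ => (U2 h (Δ / (j : ℝ))) ^ j) lam := by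
    have := hU2.pow j
    rwa [harith] at this
  -- representation of the exponential of H
  have hE : HasRep (fun Δ : ℝ =>
      NormedSpace.exp ((-(Δ : ℂ) * Complex.I) • H)) lam := by
    have hfacH : ∀ Δ : ℝ, (-(Δ : ℂ) * Complex.I) • H = Δ • ((-Complex.I) • H) := by
      intro Δ
      rw [← smul_assoc]
      congr 1
      rw [Complex.real_smul]; ring
    have hnormB : ‖(-Complex.I) • H‖ ≤ lam := by
      rw [norm_smul, norm_neg, Complex.norm_I, one_mul, hH, hlam]
      exact norm_sum_le _ _
    have hrep : HasRep (fun Δ : ℝ => NormedSpace.exp (Δ • ((-Complex.I) • H)))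
        ‖(-Complex.I) • H‖ := ⟨_, isRep_exp _⟩
    exact (hrep.mono hnormB).congr fun Δ => by rw [hfacH]
  obtain ⟨pc, hpc⟩ := hP
  obtain ⟨qc, hqc⟩ := hE
  set c : ℕ → Matrix (Fin d) (Fin d) ℂ := fun n => pc n - qc n with hc
  have hcb : ∀ n, ‖c n‖ ≤ 2 * (lam ^ n / n.factorial) := by
    intro n
    calc ‖c n‖ ≤ ‖pc n‖ + ‖qc n‖ := norm_sub_le _ _
      _ ≤ lam ^ n / n.factorial + lam ^ n / n.factorial :=
          add_le_add (hpc.2.1 n) (hqc.2.1 n)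
      _ = 2 * (lam ^ n / n.factorial) := by ring
  have hfs : ∀ Δ' : ℝ, f Δ' = ∑' n, Δ' ^ n • c n := by
    intro Δ'
    have e1 : (U2 h (Δ' / (j : ℝ))) ^ j = ∑' n, Δ' ^ n • pc n := hpc.2.2 Δ'
    have e2 : NormedSpace.exp ((-(Δ' : ℂ) * Complex.I) • H)
        = ∑' n, Δ' ^ n • qc n := hqc.2.2 Δ'
    rw [hf Δ', e1, e2, ← Summable.tsum_sub (hpc.summable Δ') (hqc.summable Δ')]
    exact tsum_congr fun n => (smul_sub _ _ _).symm
  have hsnorm : ∀ Δ' : ℝ, Summable fun n => ‖Δ' ^ n • c n‖ := by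
    intro Δ'
    refine Summable.of_nonneg_of_le (fun n => norm_nonneg _) (fun n => ?_)
      ((Real.summable_pow_div_factorial (lam * |Δ'|)).mul_left 2)
    calc ‖Δ' ^ n • c n‖ = |Δ'| ^ n * ‖c n‖ := by
          rw [norm_smul, Real.norm_eq_abs, abs_pow]
      _ ≤ |Δ'| ^ n * (2 * (lam ^ n / n.factorial)) := by
          have := hcb n; gcongr
      _ = 2 * ((lam * |Δ'|) ^ n / n.factorial) := by rw [mul_pow]; ring
  have hiter : ∀ n, iteratedDeriv n f 0 = n.factorial • c n :=
    iteratedDeriv_of_rep hsnorm hfs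
  intro Δ
  set x : ℝ := lam * |Δ| with hxdef
  have hx : 0 ≤ x := mul_nonneg hlam0 (abs_nonneg Δ)
  set K : ℕ := 2 * m + 1 with hK
  have hterm : ∀ n, ((Δ ^ n / n.factorial : ℝ)) • iteratedDeriv n f 0 = Δ ^ n • c n := by
    intro n
    rw [hiter n, ← Nat.cast_smul_eq_nsmul ℝ, smul_smul,
      div_mul_cancel₀ _ (Nat.cast_ne_zero.mpr n.factorial_ne_zero)]
  rw [Finset.sum_congr rfl fun n _ => hterm n]
  have hsum := (hsnorm Δ).of_norm
  have htail : f Δ - ∑ n ∈ Finset.range K, Δ ^ n • c n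
      = ∑' n, Δ ^ (n + K) • c (n + K) := by
    rw [hfs Δ]
    have hadd := Summable.sum_add_tsum_nat_add (f := fun n => Δ ^ n • c n) K hsum
    rw [← hadd, add_sub_cancel_left]
  rw [htail]
  have hcomp : Summable fun n => ‖Δ ^ (n + K) • c (n + K)‖ :=
    (hsnorm Δ).comp_injective (add_left_injective K)
  have hcomp2 : Summable fun n : ℕ => 2 * (x ^ (n + K) / (n + K).factorial) :=
    ((Real.summable_pow_div_factorial x).comp_injective (add_left_injective K)).mul_left 2
  have hpt : ∀ n : ℕ, ‖Δ ^ (n + K) • c (n + K)‖ ≤ 2 * (x ^ (n + K) / (n + K).factorial) := by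
    intro n
    calc ‖Δ ^ (n + K) • c (n + K)‖ = |Δ| ^ (n + K) * ‖c (n + K)‖ := by
          rw [norm_smul, Real.norm_eq_abs, abs_pow]
      _ ≤ |Δ| ^ (n + K) * (2 * (lam ^ (n + K) / (n + K).factorial)) := by
          have := hcb (n + K); gcongr
      _ = 2 * (x ^ (n + K) / (n + K).factorial) := by rw [hxdef, mul_pow]; ring
  calc ‖∑' n, Δ ^ (n + K) • c (n + K)‖
      ≤ ∑' n, ‖Δ ^ (n + K) • c (n + K)‖ := norm_tsum_le_tsum_norm hcomp
    _ ≤ ∑' n : ℕ, 2 * (x ^ (n + K) / (n + K).factorial) := Summable.tsum_le_tsum hpt hcomp hcomp2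
    _ = 2 * ∑' n : ℕ, x ^ (n + K) / (n + K).factorial := tsum_mul_left
    _ ≤ 2 * (x ^ K / K.factorial * Real.exp x) := by
        have := tail_exp_bound hx K
        gcongr
    _ = 2 * x ^ K / K.factorial * Real.exp x := by ring
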